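/- Let f : I → ℝ be strictly increasing. If the sequence of means (A_f^{[n]})_{n∈ℕ} is associative (i.e., for all n, all k ∈ {1,…,n−1} and x ∈ Iⁿ, A_f^{[n]}(x) = A_f^{[n]}(y,…,y,x_{k+1},…,xₙ) where y = A_f^{[k]}(x₁,…,x_k)), then f is continuous on I. -/

import Mathlib

open Set Filter Topology

/-- `finv` is the generalized inverse of the strictly increasing function `f : I → ℝ`:
an increasing continuous left inverse of `f` mapping `conv (f '' I)` into `I`. -/
def IsGenInv (I : Set ℝ) (f finv : ℝ → ℝ) : Prop :=
  MonotoneOn finv (convexHull ℝ (f '' I)) ∧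
  ContinuousOn finv (convexHull ℝ (f '' I)) ∧
  Set.MapsTo finv (convexHull ℝ (f '' I)) I ∧
  ∀ x ∈ I, finv (f x) = x

/-- The `n`-variable generalized quasiarithmetic mean `A_f^{[n]}` generated by `f`,
where `finv` is the generalized inverse of `f`. -/
noncomputable def qam (finv f : ℝ → ℝ) (n : ℕ) (x : Fin n → ℝ) : ℝ :=
  finv ((∑ i, f (x i)) / n)

private lemma sum_if_lt (a b : ℝ) {t m : ℕ} (h : t ≤ m) :
    ∑ i ∈ Finset.range m, (if i < t then a else b) = t * a + ((m - t : ℕ) : ℝ) * b := by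
  rw [Finset.range_eq_Ico, ← Finset.sum_Ico_consecutive _ (Nat.zero_le t) h]
  rw [Finset.sum_congr rfl (fun i hi => if_pos (Finset.mem_Ico.mp hi).2),
      Finset.sum_congr rfl (fun i hi => if_neg (Nat.not_lt.mpr (Finset.mem_Ico.mp hi).1))]
  simp [mul_comm]

private lemma key (I : Set ℝ) (f finv : ℝ → ℝ)
    (hassoc : ∀ n k : ℕ, 0 < k → ∀ hkn : k < n, ∀ x : Fin n → ℝ, (∀ i, x i ∈ I) →
      qam finv f n x = qam finv f n
        (fun i => if (i : ℕ) < k then qam finv f k (fun j => x ⟨j.1, j.2.trans hkn⟩)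
          else x i))
    {u x₀ : ℝ} (hu : u ∈ I) (hx₀ : x₀ ∈ I)
    (hfix : finv (f x₀) = x₀)
    (hmid : finv ((f u + f x₀) / 2) = x₀)
    (m : ℕ) :
    finv ((m * f u + f x₀) / (m + 1)) = x₀ := by
  suffices h : ∀ j, j ≤ m → finv ((j * f u + ((m : ℝ) + 1 - j) * f x₀) / (m + 1)) = x₀ by
    have h2 := h m le_rfl
    rw [show ((m : ℝ) + 1 - m) = 1 by ring, one_mul] at h2
    exact h2
  intro j
  induction j with
  | zero =>
    intro _
    have hm1 : (m : ℝ) + 1 ≠ 0 := by positivity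
    rw [show (((0 : ℕ) : ℝ) * f u + ((m : ℝ) + 1 - ((0 : ℕ) : ℝ)) * f x₀) / (m + 1) = f x₀
      from by field_simp; simp]
    exact hfix
  | succ j ih =>
    intro hj
    obtain ⟨m', rfl⟩ : ∃ m', m = m' + 1 := ⟨m - 1, by omega⟩
    have hjm' : j ≤ m' := by omega
    set z : Fin m' → ℝ := fun i => if i.1 < j then u else x₀ with hz
    set x : Fin (m' + 2) → ℝ := Fin.cons u (Fin.cons x₀ z) with hx
    have hxI : ∀ i, x i ∈ I := by
      intro i
      refine Fin.cases ?_ (fun i' => ?_) i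
      · simpa [hx] using hu
      · refine Fin.cases ?_ (fun i'' => ?_) i'
        · simpa [hx] using hx₀
        · simp only [hx, Fin.cons_succ, hz]
          split <;> assumption
    rcases Nat.eq_zero_or_pos m' with rfl | hm'
    · obtain rfl : j = 0 := by omega
      convert hmid using 2
      push_cast
      ring
    have h2n : (2 : ℕ) < m' + 2 := by omega
    have heq := hassoc (m' + 2) 2 (by norm_num) h2n x hxI
    have hinner : qam finv f 2 (fun j : Fin 2 => x ⟨j.1, j.2.trans h2n⟩) = x₀ := by
      have e0 : ∀ h : (0 : ℕ) < m' + 2, x ⟨0, h⟩ = u := fun _ => rfl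
      have e1 : ∀ h : (1 : ℕ) < m' + 2, x ⟨1, h⟩ = x₀ := fun _ => rfl
      simp only [qam, Fin.sum_univ_two]
      norm_num [e0, e1]
      exact hmid
    rw [hinner] at heq
    have hfun : (fun i : Fin (m' + 2) => if (i : ℕ) < 2 then x₀ else x i)
        = Fin.cons x₀ (Fin.cons x₀ z) := by
      funext i
      refine Fin.cases ?_ (fun i' => ?_) i
      · simp
      · refine Fin.cases ?_ (fun i'' => ?_) i'
        · simp
        · simp [hx, Fin.cons_succ]
    rw [hfun] at heq
    have hsumz : ∑ i : Fin m', f (z i) = (j : ℝ) * f u + ((m' - j : ℕ) : ℝ) * f x₀ := by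
      simp only [hz, apply_ite f]
      rw [Fin.sum_univ_eq_sum_range (fun i => if i < j then f u else f x₀) m']
      exact sum_if_lt _ _ hjm'
    have hsum1 : ∑ i : Fin (m' + 2), f (x i)
        = ((j : ℝ) + 1) * f u + (((m' : ℝ) + 1) - j) * f x₀ := by
      rw [hx, Fin.sum_univ_succ, Fin.sum_univ_succ]
      simp only [Fin.cons_zero, Fin.cons_succ]
      rw [hsumz]
      push_cast [Nat.cast_sub hjm']
      ring
    have hsum2 : ∑ i : Fin (m' + 2), f ((Fin.cons x₀ (Fin.cons x₀ z) : Fin (m'+2) → ℝ) i)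
        = (j : ℝ) * f u + (((m' : ℝ) + 2) - j) * f x₀ := by
      rw [Fin.sum_univ_succ, Fin.sum_univ_succ]
      simp only [Fin.cons_zero, Fin.cons_succ]
      rw [hsumz]
      push_cast [Nat.cast_sub hjm']
      ring
    simp only [qam, hsum1, hsum2] at heq
    have hA : ((((j : ℕ) + 1 : ℕ) : ℝ) * f u + (((m' + 1 : ℕ) : ℝ) + 1 - (((j : ℕ) + 1 : ℕ) : ℝ)) * f x₀) / (((m' + 1 : ℕ) : ℝ) + 1)
        = (((j : ℝ) + 1) * f u + (((m' : ℝ) + 1) - j) * f x₀) / ((m' + 2 : ℕ) : ℝ) := by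
      push_cast; ring
    have hB : ((j : ℝ) * f u + (((m' : ℝ) + 2) - j) * f x₀) / ((m' + 2 : ℕ) : ℝ)
        = ((j : ℝ) * f u + (((m' + 1 : ℕ) : ℝ) + 1 - (j : ℝ)) * f x₀) / (((m' + 1 : ℕ) : ℝ) + 1) := by
      push_cast; ring
    rw [hA, heq, hB]
    exact ih (by omega)

/-- if the sequence of means `(A_f^{[n]})ₙ` is associative, then `f` is
continuous on `I`. -/
theorem stmt10 (I : Set ℝ) (hIo : IsOpen I) (hIc : I.OrdConnected) (hne : I.Nonempty)
    (f finv : ℝ → ℝ) (hf : StrictMonoOn f I) (hinv : IsGenInv I f finv)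
    (hassoc : ∀ n k : ℕ, 0 < k → ∀ hkn : k < n, ∀ x : Fin n → ℝ, (∀ i, x i ∈ I) →
      qam finv f n x = qam finv f n
        (fun i => if (i : ℕ) < k then qam finv f k (fun j => x ⟨j.1, j.2.trans hkn⟩)
          else x i)) :
    ContinuousOn f I := by
  obtain ⟨hmono, hcont, hmaps, hfixall⟩ := hinv
  have hullC : (convexHull ℝ (f '' I)).OrdConnected := (convex_convexHull ℝ _).ordConnected
  have hsub : f '' I ⊆ convexHull ℝ (f '' I) := subset_convexHull ℝ _
  have hmemh : ∀ w ∈ I, f w ∈ convexHull ℝ (f '' I) := fun w hw => hsub ⟨w, hw, rfl⟩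
  intro x₀ hx₀
  obtain ⟨δ₀, hδ₀, hball⟩ := Metric.isOpen_iff.mp hIo x₀ hx₀
  have ha : x₀ - δ₀ / 2 ∈ I := by
    apply hball
    rw [Metric.mem_ball, Real.dist_eq, abs_lt]
    constructor <;> linarith
  have hb : x₀ + δ₀ / 2 ∈ I := by
    apply hball
    rw [Metric.mem_ball, Real.dist_eq, abs_lt]
    constructor <;> linarith
  set a := x₀ - δ₀ / 2 with hadef
  set b := x₀ + δ₀ / 2 with hbdef
  have halt : a < x₀ := by rw [hadef]; linarith
  have hblt : x₀ < b := by rw [hbdef]; linarith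
  have hfix := hfixall x₀ hx₀
  -- membership of intermediate points
  have hmidI : ∀ w w', w ∈ I → w' ∈ I → ∀ y, w ≤ y → y ≤ w' → y ∈ I :=
    fun w w' hw hw' y h1 h2 => hIc.out hw hw' ⟨h1, h2⟩
  -- LEFT
  have hLne : (f '' (I ∩ Iio x₀)).Nonempty := ⟨f a, ⟨a, ⟨ha, halt⟩, rfl⟩⟩
  have hLbdd : BddAbove (f '' (I ∩ Iio x₀)) := by
    refine ⟨f x₀, ?_⟩
    rintro _ ⟨w, ⟨hwI, hwlt⟩, rfl⟩
    exact (hf hwI hx₀ hwlt).le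
  set L := sSup (f '' (I ∩ Iio x₀)) with hLdef
  have hfuleL : ∀ w ∈ I, w < x₀ → f w ≤ L := fun w hw hlt =>
    le_csSup hLbdd ⟨w, ⟨hw, hlt⟩, rfl⟩
  have hLle : L ≤ f x₀ := by
    apply csSup_le hLne
    rintro _ ⟨w, ⟨hwI, hwlt⟩, rfl⟩
    exact (hf hwI hx₀ hwlt).le
  have left : L = f x₀ := by
    by_contra hne'
    have hLlt : L < f x₀ := lt_of_le_of_ne hLle hne'
    have hgap : ∀ t, L < t → t ≤ f x₀ → finv t = x₀ := by
      intro t ht1 ht2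
      have htm : t ∈ convexHull ℝ (f '' I) :=
        hullC.out (hmemh a ha) (hmemh x₀ hx₀) ⟨(hfuleL a ha halt).trans ht1.le, ht2⟩
      have h1 : finv t ≤ x₀ := by
        have := hmono htm (hmemh x₀ hx₀) ht2
        rwa [hfix] at this
      have h2 : x₀ ≤ finv t := by
        by_contra hlt
        push_neg at hlt
        set w := max a ((finv t + x₀) / 2) with hwdef
        have hw1 : w < x₀ := by
          rw [hwdef]
          apply max_lt halt
          linarith
        have hwI : w ∈ I := hmidI a x₀ ha hx₀ w (le_max_left _ _) hw1.le
        have hle : w ≤ finv t := by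
          have hfw : f w ≤ t := (hfuleL w hwI hw1).trans ht1.le
          have := hmono (hmemh w hwI) htm hfw
          rwa [hfixall w hwI] at this
        have : finv t < w := lt_of_lt_of_le (by linarith) (le_max_right a _)
        linarith
      linarith
    -- pick u
    obtain ⟨y, hy, hy2⟩ := exists_lt_of_lt_csSup hLne (show 2 * L - f x₀ < L by linarith)
    obtain ⟨u₀, ⟨hu₀I, hu₀lt⟩, rfl⟩ := hy
    rw [mem_Iio] at hu₀lt
    set u := (u₀ + x₀) / 2 with hudef
    have huI : u ∈ I := hmidI u₀ x₀ hu₀I hx₀ u (by rw [hudef]; linarith) (by rw [hudef]; linarith)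
    have hult : u < x₀ := by rw [hudef]; linarith
    have hfu_gt : 2 * L - f x₀ < f u := hy2.trans_le (hf hu₀I huI (by rw [hudef]; linarith)).le
    have hfu_lt_L : f u < L := by
      have hu'I : (u + x₀) / 2 ∈ I := hmidI u x₀ huI hx₀ _ (by linarith) (by linarith)
      have h1 : f u < f ((u + x₀) / 2) := hf huI hu'I (by linarith)
      have h2 : f ((u + x₀) / 2) ≤ L := hfuleL _ hu'I (by linarith)
      linarith
    have hfuord : f u < f x₀ := hf huI hx₀ hult
    have hmid : finv ((f u + f x₀) / 2) = x₀ := hgap _ (by linarith) (by linarith)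
    obtain ⟨m, hm⟩ := exists_nat_gt ((f x₀ - f u) / (L - f u))
    have hkey := key I f finv hassoc huI hx₀ hfix hmid m
    have hs : ((m : ℝ) * f u + f x₀) / (m + 1) < L := by
      rw [div_lt_iff₀ (by positivity)]
      have hd : 0 < L - f u := by linarith
      rw [div_lt_iff₀ hd] at hm
      linarith [hfu_lt_L]
    obtain ⟨y', hy', hy'2⟩ := exists_lt_of_lt_csSup hLne hs
    obtain ⟨w, ⟨hwI, hwlt⟩, rfl⟩ := hy'
    rw [mem_Iio] at hwlt
    have hsm : ((m : ℝ) * f u + f x₀) / (m + 1) ∈ convexHull ℝ (f '' I) := by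
      refine hullC.out (hmemh u huI) (hmemh x₀ hx₀) ⟨?_, ?_⟩
      · rw [le_div_iff₀ (by positivity)]; linarith [hfuord]
      · rw [div_le_iff₀ (by positivity)]
        linarith [mul_nonneg (Nat.cast_nonneg m : (0:ℝ) ≤ (m:ℝ)) (sub_nonneg.mpr hfuord.le)]
    have := hmono hsm (hmemh w hwI) hy'2.le
    rw [hkey, hfixall w hwI] at this
    linarith
  -- RIGHT
  have hRne : (f '' (I ∩ Ioi x₀)).Nonempty := ⟨f b, ⟨b, ⟨hb, hblt⟩, rfl⟩⟩
  have hRbdd : BddBelow (f '' (I ∩ Ioi x₀)) := by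
    refine ⟨f x₀, ?_⟩
    rintro _ ⟨w, ⟨hwI, hwgt⟩, rfl⟩
    exact (hf hx₀ hwI hwgt).le
  set R := sInf (f '' (I ∩ Ioi x₀)) with hRdef
  have hfvgeR : ∀ w ∈ I, x₀ < w → R ≤ f w := fun w hw hgt =>
    csInf_le hRbdd ⟨w, ⟨hw, hgt⟩, rfl⟩
  have hRge : f x₀ ≤ R := by
    apply le_csInf hRne
    rintro _ ⟨w, ⟨hwI, hwgt⟩, rfl⟩
    exact (hf hx₀ hwI hwgt).le
  have right : R = f x₀ := by
    by_contra hne'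
    have hRgt : f x₀ < R := lt_of_le_of_ne hRge (Ne.symm hne')
    have hgap : ∀ t, f x₀ ≤ t → t < R → finv t = x₀ := by
      intro t ht1 ht2
      have htm : t ∈ convexHull ℝ (f '' I) :=
        hullC.out (hmemh x₀ hx₀) (hmemh b hb) ⟨ht1, ht2.le.trans (hfvgeR b hb hblt)⟩
      have h1 : x₀ ≤ finv t := by
        have := hmono (hmemh x₀ hx₀) htm ht1
        rwa [hfix] at this
      have h2 : finv t ≤ x₀ := by
        by_contra hlt
        push_neg at hlt
        set w := min b ((finv t + x₀) / 2) with hwdef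
        have hw1 : x₀ < w := by
          rw [hwdef]
          apply lt_min hblt
          linarith
        have hwI : w ∈ I := hmidI x₀ b hx₀ hb w hw1.le (min_le_left _ _)
        have hle : finv t ≤ w := by
          have hfw : t ≤ f w := ht2.le.trans (hfvgeR w hwI hw1)
          have := hmono htm (hmemh w hwI) hfw
          rwa [hfixall w hwI] at this
        have : w < finv t := lt_of_le_of_lt (min_le_right b _) (by linarith)
        linarith
      linarith
    obtain ⟨y, hy, hy2⟩ := exists_lt_of_csInf_lt hRne (show R < 2 * R - f x₀ by linarith)
    obtain ⟨v₀, ⟨hv₀I, hv₀gt⟩, rfl⟩ := hy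
    rw [mem_Ioi] at hv₀gt
    set v := (v₀ + x₀) / 2 with hvdef
    have hvI : v ∈ I := hmidI x₀ v₀ hx₀ hv₀I v (by rw [hvdef]; linarith) (by rw [hvdef]; linarith)
    have hvgt : x₀ < v := by rw [hvdef]; linarith
    have hfv_lt : f v < 2 * R - f x₀ := lt_trans (hf hvI hv₀I (by rw [hvdef]; linarith)) hy2
    have hfv_gt_R : R < f v := by
      have hv'I : (v + x₀) / 2 ∈ I := hmidI x₀ v hx₀ hvI _ (by linarith) (by linarith)
      have h1 : f ((v + x₀) / 2) < f v := hf hv'I hvI (by linarith)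
      have h2 : R ≤ f ((v + x₀) / 2) := hfvgeR _ hv'I (by linarith)
      linarith
    have hfvord : f x₀ < f v := hf hx₀ hvI hvgt
    have hmid : finv ((f v + f x₀) / 2) = x₀ := hgap _ (by linarith) (by linarith)
    obtain ⟨m, hm⟩ := exists_nat_gt ((f v - f x₀) / (f v - R))
    have hkey := key I f finv hassoc hvI hx₀ hfix hmid m
    have hs : R < ((m : ℝ) * f v + f x₀) / (m + 1) := by
      rw [lt_div_iff₀ (by positivity)]
      have hd : 0 < f v - R := by linarith
      rw [div_lt_iff₀ hd] at hm
      linarith [hfv_gt_R]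
    obtain ⟨y', hy', hy'2⟩ := exists_lt_of_csInf_lt hRne hs
    obtain ⟨w, ⟨hwI, hwgt⟩, rfl⟩ := hy'
    rw [mem_Ioi] at hwgt
    have hsm : ((m : ℝ) * f v + f x₀) / (m + 1) ∈ convexHull ℝ (f '' I) := by
      refine hullC.out (hmemh x₀ hx₀) (hmemh v hvI) ⟨?_, ?_⟩
      · rw [le_div_iff₀ (by positivity)]
        linarith [mul_nonneg (Nat.cast_nonneg m : (0:ℝ) ≤ (m:ℝ)) (sub_nonneg.mpr hfvord.le)]
      · rw [div_le_iff₀ (by positivity)]; linarith [hfvord]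
    have := hmono (hmemh w hwI) hsm hy'2.le
    rw [hkey, hfixall w hwI] at this
    linarith
  -- ε-δ
  rw [Metric.continuousWithinAt_iff]
  intro ε hε
  obtain ⟨y, hy, hyu⟩ := exists_lt_of_lt_csSup hLne (by rw [left] at *; linarith : f x₀ - ε < L)
  obtain ⟨u, ⟨huI, hult⟩, rfl⟩ := hy
  rw [mem_Iio] at hult
  obtain ⟨y', hy', hyv⟩ := exists_lt_of_csInf_lt hRne (by rw [right] at *; linarith : R < f x₀ + ε)
  obtain ⟨v, ⟨hvI, hvgt⟩, rfl⟩ := hy'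
  rw [mem_Ioi] at hvgt
  refine ⟨min (x₀ - u) (v - x₀), by apply lt_min <;> linarith, ?_⟩
  intro x hxI hdist
  rw [Real.dist_eq, abs_lt] at hdist
  have hd1 : (x₀ - u) ≤ min (x₀ - u) (v - x₀) → True := fun _ => trivial
  have hxu : u < x := by
    have := min_le_left (x₀ - u) (v - x₀)
    linarith [hdist.1]
  have hxv : x < v := by
    have := min_le_right (x₀ - u) (v - x₀)
    linarith [hdist.2]
  have h1 : f u < f x := hf huI hxI hxu
  have h2 : f x < f v := hf hxI hvI hxv
  rw [Real.dist_eq, abs_lt]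
  constructor <;> linarith
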